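/- Let f(x) = (K − e^x)⁺ for K > 0 be the put payoff. For z ∈ ℂ with Im z ∈ (−∞, 0), the Fourier transform ∫_ℝ e^{izx} f(x) dx exists and equals K^{1+iz} / (iz(1+iz)). -/

import Mathlib

open MeasureTheory Complex Set Filter

lemma exp_mul_integrableOn_Iic {a : ℝ} (ha : 0 < a) (L : ℝ) :
    IntegrableOn (fun x : ℝ => Real.exp (a * x)) (Iic L) := by
  have h1 : Integrable ((Ioi (-L)).indicator fun x : ℝ => Real.exp (-a * x)) :=
    (integrable_indicator_iff measurableSet_Ioi).2 (exp_neg_integrableOn_Ioi (-L) ha)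
  have h2 := h1.comp_neg
  have heq : (fun x : ℝ => (Ioi (-L)).indicator (fun x : ℝ => Real.exp (-a * x)) (-x)) =
      (Iio L).indicator fun x : ℝ => Real.exp (a * x) := by
    funext x
    by_cases hx : x < L
    · rw [Set.indicator_of_mem (show -x ∈ Ioi (-L) by simpa using hx),
        Set.indicator_of_mem (show x ∈ Iio L from hx)]
      ring_nf
    · rw [Set.indicator_of_notMem (show -x ∉ Ioi (-L) by simpa using hx),
        Set.indicator_of_notMem (show x ∉ Iio L from hx)]
  rw [heq] at h2
  have h3 : IntegrableOn (fun x : ℝ => Real.exp (a * x)) (Iio L) :=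
    (integrable_indicator_iff measurableSet_Iio).1 h2
  exact h3.congr_set_ae Iio_ae_eq_Iic.symm

lemma cexp_mul_integrableOn_Iic {c : ℂ} (hc : 0 < c.re) (L : ℝ) :
    IntegrableOn (fun x : ℝ => Complex.exp (c * x)) (Iic L) := by
  refine ((exp_mul_integrableOn_Iic hc L).mono'
    ((Complex.continuous_exp.comp
      (continuous_const.mul Complex.continuous_ofReal)).aestronglyMeasurable) ?_)
  filter_upwards with x
  rw [Complex.norm_exp]
  simp [Complex.mul_re]

lemma cexp_mul_hasDerivAt {c : ℂ} (hc : c ≠ 0) (x : ℝ) :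
    HasDerivAt (fun x : ℝ => Complex.exp (c * x) / c) (Complex.exp (c * x)) x := by
  have h1 : HasDerivAt (fun x : ℝ => c * (x : ℂ)) c x := by
    simpa using (Complex.ofRealCLM.hasDerivAt (x := x)).const_mul c
  simpa [mul_div_cancel_right₀ _ hc] using h1.cexp.div_const c

lemma integral_cexp_mul_Iic {c : ℂ} (hc : 0 < c.re) (L : ℝ) :
    ∫ x in Iic L, Complex.exp (c * x) = Complex.exp (c * L) / c := by
  have hc0 : c ≠ 0 := fun h => by simp [h] at hc
  have hderiv : ∀ x ∈ Iic L, HasDerivAt (fun x : ℝ => Complex.exp (c * x) / c)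
      (Complex.exp (c * x)) x := fun x _ => cexp_mul_hasDerivAt hc0 x
  have htend : Tendsto (fun x : ℝ => Complex.exp (c * x) / c) atBot (nhds 0) := by
    rw [tendsto_zero_iff_norm_tendsto_zero]
    have heq : (fun x : ℝ => ‖Complex.exp (c * x) / c‖) =
        fun x : ℝ => Real.exp (c.re * x) / ‖c‖ := by
      funext x
      rw [norm_div, Complex.norm_exp]
      simp [Complex.mul_re]
    rw [heq]
    have h1 : Tendsto (fun x : ℝ => c.re * x) atBot atBot :=
      tendsto_id.const_mul_atBot hc
    simpa using (Real.tendsto_exp_atBot.comp h1).div_const ‖c‖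
  have := integral_Iic_of_hasDerivAt_of_tendsto' hderiv (cexp_mul_integrableOn_Iic hc L) htend
  rw [this, sub_zero]

/-- Fourier transform of the put payoff `f(x) = (K - e^x)⁺`, `K > 0`: for `z ∈ ℂ` with
`Im z ∈ (-∞,0)`, `∫_ℝ e^{izx} f(x) dx` exists and equals `K^{1+iz}/(iz(1+iz))`. -/
theorem fourier_put_payoff (K : ℝ) (hK : 0 < K) (z : ℂ) (hz : z.im < 0) :
    Integrable (fun x : ℝ =>
      Complex.exp (Complex.I * z * x) * ((max (K - Real.exp x) 0 : ℝ) : ℂ))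
      (volume : Measure ℝ) ∧
    ∫ x : ℝ, Complex.exp (Complex.I * z * x) * ((max (K - Real.exp x) 0 : ℝ) : ℂ) =
      Complex.exp ((1 + Complex.I * z) * Real.log K) /
        (Complex.I * z * (1 + Complex.I * z)) := by
  set L := Real.log K with hL
  set c₁ : ℂ := Complex.I * z with hc₁
  set c₂ : ℂ := 1 + Complex.I * z with hc₂
  have hc₁re : 0 < c₁.re := by simp [hc₁, Complex.mul_re]; linarith
  have hc₂re : 0 < c₂.re := by simp [hc₂, Complex.mul_re]; linarith
  have hc₁0 : c₁ ≠ 0 := fun h => by simp [h] at hc₁re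
  have hc₂0 : c₂ ≠ 0 := fun h => by simp [h] at hc₂re
  have hKL : Real.exp L = K := Real.exp_log hK
  have hfun : (fun x : ℝ =>
      Complex.exp (Complex.I * z * x) * ((max (K - Real.exp x) 0 : ℝ) : ℂ)) =
      (Iic L).indicator (fun x : ℝ =>
        (K : ℂ) * Complex.exp (c₁ * x) - Complex.exp (c₂ * x)) := by
    funext x
    by_cases hx : x ≤ L
    · rw [Set.indicator_of_mem (show x ∈ Iic L from hx)]
      have hle : Real.exp x ≤ K := by rw [← hKL]; exact Real.exp_le_exp.2 hx
      rw [max_eq_left (by linarith)]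
      push_cast
      rw [show c₂ * (x : ℂ) = c₁ * x + x by rw [hc₂, hc₁]; ring, Complex.exp_add,
        ← Complex.ofReal_exp, hc₁]
      ring
    · rw [Set.indicator_of_notMem (show x ∉ Iic L from hx)]
      have hlt : K < Real.exp x := by
        rw [← hKL]; exact Real.exp_lt_exp.2 (lt_of_not_ge hx)
      rw [max_eq_right (by linarith)]
      simp
  have hint : IntegrableOn (fun x : ℝ =>
      (K : ℂ) * Complex.exp (c₁ * x) - Complex.exp (c₂ * x)) (Iic L) :=
    ((cexp_mul_integrableOn_Iic hc₁re L).const_mul _).sub (cexp_mul_integrableOn_Iic hc₂re L)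
  constructor
  · rw [hfun]
    exact (integrable_indicator_iff measurableSet_Iic).2 hint
  · rw [hfun, integral_indicator measurableSet_Iic]
    rw [integral_sub ((cexp_mul_integrableOn_Iic hc₁re L).const_mul _)
      (cexp_mul_integrableOn_Iic hc₂re L)]
    rw [integral_const_mul, integral_cexp_mul_Iic hc₁re, integral_cexp_mul_Iic hc₂re]
    have hKc : (K : ℂ) * Complex.exp (c₁ * L) = Complex.exp (c₂ * L) := by
      rw [← hKL, Complex.ofReal_exp, ← Complex.exp_add]
      congr 1
      rw [hc₂, hc₁]; ring
    rw [← mul_div_assoc, hKc, div_sub_div _ _ hc₁0 hc₂0]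
    have hd : Complex.exp (c₂ * L) * c₂ - c₁ * Complex.exp (c₂ * L) = Complex.exp (c₂ * L) := by
      rw [hc₂, hc₁]; ring
    rw [hd]
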